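/- The set of points (x₁,x₂,x₃) satisfying -½x₂ + 3x₃ ≤ 0, -x₃ ≤ 0, -½x₁ + ½x₂ - (7/2)x₃ ≤ 0, ½x₁ + (3/2)x₃ ≤ ½, with x₁ ∈ ℤ and x₃ ∈ {0,1}, equals {(0,0,0)} ∪ {(1, x₂, 0) : x₂ ∈ [0,1]}. -/

import Mathlib

theorem stmt1 :
    {x : Fin 3 → ℝ |
        -(1/2) * x 1 + 3 * x 2 ≤ 0 ∧
        -(x 2) ≤ 0 ∧
        -(1/2) * x 0 + (1/2) * x 1 - (7/2) * x 2 ≤ 0 ∧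
        (1/2) * x 0 + (3/2) * x 2 ≤ 1/2 ∧
        (∃ n : ℤ, x 0 = (n : ℝ)) ∧
        (x 2 = 0 ∨ x 2 = 1)} =
      ({![0,0,0]} : Set (Fin 3 → ℝ)) ∪
        {p : Fin 3 → ℝ | ∃ t : ℝ, 0 ≤ t ∧ t ≤ 1 ∧ p = ![1, t, 0]} := by
  ext x
  simp only [Set.mem_setOf_eq, Set.mem_union, Set.mem_singleton_iff]
  constructor
  · rintro ⟨h1, h2, h3, h4, ⟨n, hn⟩, h5 | h5⟩
    · -- x 2 = 0
      rw [h5] at h1 h3 h4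
      have hx1nn : 0 ≤ x 1 := by linarith
      have hx1le : x 1 ≤ x 0 := by linarith
      have hx0le : (n : ℝ) ≤ 1 := by rw [← hn]; linarith
      have hx0ge : (0 : ℝ) ≤ (n : ℝ) := by rw [← hn]; linarith
      have hn1 : n ≤ 1 := by exact_mod_cast hx0le
      have hn0 : 0 ≤ n := by exact_mod_cast hx0ge
      interval_cases n
      · left
        have h0 : x 0 = 0 := by rw [hn]; norm_num
        have h1' : x 1 = 0 := by linarith [hx1le, h0.symm ▸ hx1le]
        funext i
        fin_cases i <;> simp [h0, h5]
        · linarith [hx1le]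
      · right
        refine ⟨x 1, hx1nn, ?_, ?_⟩
        · have : x 0 = 1 := by rw [hn]; norm_num
          linarith
        · funext i
          fin_cases i <;> simp [hn, h5]
    · -- x 2 = 1: contradiction
      exfalso
      rw [h5] at h1 h3 h4
      linarith
  · rintro (h | ⟨t, ht0, ht1, h⟩) <;> subst h
    · refine ⟨by simp, by simp, by simp, by simp, ⟨0, by norm_num⟩, ?_⟩
      left; simp
    · refine ⟨?_, ?_, ?_, ?_, ⟨1, by norm_num⟩, ?_⟩ <;> simp <;> linarith
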